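/- arXiv:2312.05556 — 3 statements merged into one kernel-verified Lean document; each statement's English description precedes it below -/
import Mathlib

section
/- Let σ be a C¹ matrix field (σ_{ij} : ℝ² → ℝ), τ a C² third-order tensor field (τ_{ijk} : ℝ² → ℝ), and r : ℝ² → ℝ² a C² vector field, all on a neighbourhood of the RVE domain v. Assume: (i) the equilibrium equations Σ_j ∂(σ_{ij} − Σ_k ∂τ_{ijk}/∂x_k)/∂x_j = 0 hold at every point of v; (ii) each component of σ, τ, the first derivatives ∂τ_{ijk}/∂x_l, r, and the first derivatives ∂r_i/∂x_j is boundary-periodic on v. Then the microfluctuation work vanishes: ∫_v Σ_{i,j} σ_{ij} ∂r_i/∂x_j dv + ∫_v Σ_{i,j,k} τ_{ijk} ∂²r_i/(∂x_j ∂x_k) dv = 0. -/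
open MeasureTheory

/-- First partial derivative `∂f/∂x_j` of a scalar field on `ℝ²`. -/
noncomputable def pd (f : (Fin 2 → ℝ) → ℝ) (j : Fin 2) (x : Fin 2 → ℝ) : ℝ :=
  fderiv ℝ f x (Pi.single j 1)

/-- Second partial derivative `∂²f/(∂x_j ∂x_k)` of a scalar field on `ℝ²`. -/
noncomputable def pd2 (f : (Fin 2 → ℝ) → ℝ) (j k : Fin 2) (x : Fin 2 → ℝ) : ℝ :=
  pd (fun y => pd f k y) j x

/-- A function on the rectangle `[a₁,b₁]×[a₂,b₂]` is boundary-periodic if it takes equal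
values at opposite points of the left/right and bottom/top edges. -/
def BoundaryPeriodic (a b : Fin 2 → ℝ) (h : (Fin 2 → ℝ) → ℝ) : Prop :=
  (∀ y ∈ Set.Icc (a 1) (b 1), h ![b 0, y] = h ![a 0, y]) ∧
  (∀ x ∈ Set.Icc (a 0) (b 0), h ![x, b 1] = h ![x, a 1])

section helpers
variable {x : Fin 2 → ℝ} {j : Fin 2} {u v : (Fin 2 → ℝ) → ℝ}

lemma pd_sub (hu : DifferentiableAt ℝ u x) (hv : DifferentiableAt ℝ v x) :
    pd (fun y => u y - v y) j x = pd u j x - pd v j x := by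
  simp [pd, fderiv_fun_sub hu hv]

lemma pd_add (hu : DifferentiableAt ℝ u x) (hv : DifferentiableAt ℝ v x) :
    pd (fun y => u y + v y) j x = pd u j x + pd v j x := by
  simp [pd, fderiv_fun_add hu hv]

lemma pd_mul (hu : DifferentiableAt ℝ u x) (hv : DifferentiableAt ℝ v x) :
    pd (fun y => u y * v y) j x = pd u j x * v x + u x * pd v j x := by
  simp [pd, fderiv_fun_mul hu hv]; ring

lemma pd_sum {ι : Type*} (s : Finset ι) (f : ι → (Fin 2 → ℝ) → ℝ)
    (h : ∀ i ∈ s, DifferentiableAt ℝ (f i) x) :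
    pd (fun y => ∑ i ∈ s, f i y) j x = ∑ i ∈ s, pd (f i) j x := by
  simp [pd, fderiv_fun_sum h]

lemma pd_contDiffOn {f : (Fin 2 → ℝ) → ℝ} {U : Set (Fin 2 → ℝ)} (hU : IsOpen U)
    (hf : ContDiffOn ℝ 2 f U) (l : Fin 2) : ContDiffOn ℝ 1 (pd f l) U := by
  have h1 : ContDiffOn ℝ 1 (fderiv ℝ f) U := hf.fderiv_of_isOpen hU le_rfl
  exact h1.clm_apply contDiffOn_const

lemma pd_continuousOn {f : (Fin 2 → ℝ) → ℝ} {U : Set (Fin 2 → ℝ)} (hU : IsOpen U)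
    (hf : ContDiffOn ℝ 1 f U) (l : Fin 2) : ContinuousOn (pd f l) U :=
  (hf.continuousOn_fderiv_of_isOpen hU le_rfl).clm_apply continuousOn_const

lemma pd_eq_fderiv2 {f : (Fin 2 → ℝ) → ℝ} {U : Set (Fin 2 → ℝ)} (hU : IsOpen U)
    (hf : ContDiffOn ℝ 2 f U) {x : Fin 2 → ℝ} (hx : x ∈ U) (j k : Fin 2) :
    pd2 f j k x = fderiv ℝ (fderiv ℝ f) x (Pi.single j 1) (Pi.single k 1) := by
  have h1 : ContDiffOn ℝ 1 (fderiv ℝ f) U := hf.fderiv_of_isOpen hU le_rfl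
  have hd : DifferentiableAt ℝ (fderiv ℝ f) x :=
    ((h1.contDiffAt (hU.mem_nhds hx)).differentiableAt one_ne_zero)
  have : pd2 f j k x
      = fderiv ℝ ((ContinuousLinearMap.apply ℝ ℝ (Pi.single k 1 : Fin 2 → ℝ)) ∘ fderiv ℝ f) x
          (Pi.single j 1) := rfl
  rw [this, fderiv_comp x (ContinuousLinearMap.apply ℝ ℝ _).differentiableAt hd]
  simp

lemma pd2_symm {f : (Fin 2 → ℝ) → ℝ} {U : Set (Fin 2 → ℝ)} (hU : IsOpen U)
    (hf : ContDiffOn ℝ 2 f U) {x : Fin 2 → ℝ} (hx : x ∈ U) (j k : Fin 2) :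
    pd2 f j k x = pd2 f k j x := by
  have h1 : ContDiffOn ℝ 1 (fderiv ℝ f) U := hf.fderiv_of_isOpen hU le_rfl
  have hd : HasFDerivAt (fderiv ℝ f) (fderiv ℝ (fderiv ℝ f) x) x :=
    ((h1.contDiffAt (hU.mem_nhds hx)).differentiableAt one_ne_zero).hasFDerivAt
  have hev : ∀ᶠ y in nhds x, HasFDerivAt f (fderiv ℝ f y) y := by
    filter_upwards [hU.mem_nhds hx] with y hy
    exact ((hf.contDiffAt (hU.mem_nhds hy)).differentiableAt two_ne_zero).hasFDerivAt
  rw [pd_eq_fderiv2 hU hf hx, pd_eq_fderiv2 hU hf hx]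
  exact second_derivative_symmetric_of_eventually hev hd _ _

lemma BoundaryPeriodic.mul {a b : Fin 2 → ℝ} (hu : BoundaryPeriodic a b u)
    (hv : BoundaryPeriodic a b v) : BoundaryPeriodic a b (fun y => u y * v y) :=
  ⟨fun y hy => by show u _ * v _ = u _ * v _; rw [hu.1 y hy, hv.1 y hy],
   fun y hy => by show u _ * v _ = u _ * v _; rw [hu.2 y hy, hv.2 y hy]⟩

lemma BoundaryPeriodic.sub {a b : Fin 2 → ℝ} (hu : BoundaryPeriodic a b u)
    (hv : BoundaryPeriodic a b v) : BoundaryPeriodic a b (fun y => u y - v y) :=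
  ⟨fun y hy => by show u _ - v _ = u _ - v _; rw [hu.1 y hy, hv.1 y hy],
   fun y hy => by show u _ - v _ = u _ - v _; rw [hu.2 y hy, hv.2 y hy]⟩

lemma BoundaryPeriodic.add {a b : Fin 2 → ℝ} (hu : BoundaryPeriodic a b u)
    (hv : BoundaryPeriodic a b v) : BoundaryPeriodic a b (fun y => u y + v y) :=
  ⟨fun y hy => by show u _ + v _ = u _ + v _; rw [hu.1 y hy, hv.1 y hy],
   fun y hy => by show u _ + v _ = u _ + v _; rw [hu.2 y hy, hv.2 y hy]⟩

lemma BoundaryPeriodic.sum {a b : Fin 2 → ℝ} {ι : Type*} (s : Finset ι)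
    {f : ι → (Fin 2 → ℝ) → ℝ} (h : ∀ i ∈ s, BoundaryPeriodic a b (f i)) :
    BoundaryPeriodic a b (fun y => ∑ i ∈ s, f i y) :=
  ⟨fun y hy => Finset.sum_congr rfl fun i hi => (h i hi).1 y hy,
   fun y hy => Finset.sum_congr rfl fun i hi => (h i hi).2 y hy⟩

lemma insertNth_zero_eq (c : ℝ) (x : Fin 1 → ℝ) :
    (Fin.insertNth (0 : Fin 2) c x) = ![c, x 0] := by
  funext t
  fin_cases t <;> simp [Fin.insertNth]

lemma insertNth_one_eq (c : ℝ) (x : Fin 1 → ℝ) :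
    (Fin.insertNth (1 : Fin 2) c x) = ![x 0, c] := by
  rw [show (1 : Fin 2) = Fin.last 1 from rfl, Fin.insertNth_last]
  funext t
  fin_cases t <;> simp [Fin.snoc, Fin.fin_one_eq_zero]

end helpers

/-- under equilibrium `Σ_j ∂(σ_{ij} − Σ_k ∂τ_{ijk}/∂x_k)/∂x_j = 0` on the RVE
`v = [a₁,b₁]×[a₂,b₂]` and boundary-periodicity of `σ`, `τ`, `∂τ/∂x`, `r` and `∂r/∂x`, the
microfluctuation work vanishes:
`∫_v Σ σ_{ij} ∂r_i/∂x_j + ∫_v Σ τ_{ijk} ∂²r_i/(∂x_j∂x_k) = 0`. -/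
theorem microfluctuation_work_vanishes
    (a b : Fin 2 → ℝ) (hab0 : a 0 < b 0) (hab1 : a 1 < b 1)
    (U : Set (Fin 2 → ℝ)) (hU : IsOpen U) (hvU : Set.Icc a b ⊆ U)
    (σ : Fin 2 → Fin 2 → (Fin 2 → ℝ) → ℝ)
    (hσ : ∀ i j, ContDiffOn ℝ 1 (σ i j) U)
    (τ : Fin 2 → Fin 2 → Fin 2 → (Fin 2 → ℝ) → ℝ)
    (hτ : ∀ i j k, ContDiffOn ℝ 2 (τ i j k) U)
    (r : (Fin 2 → ℝ) → Fin 2 → ℝ) (hr : ContDiffOn ℝ 2 r U)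
    (hequil : ∀ x ∈ Set.Icc a b, ∀ i,
        ∑ j, pd (fun y => σ i j y - ∑ k, pd (τ i j k) k y) j x = 0)
    (hperσ : ∀ i j, BoundaryPeriodic a b (σ i j))
    (hperτ : ∀ i j k, BoundaryPeriodic a b (τ i j k))
    (hperdτ : ∀ i j k l, BoundaryPeriodic a b (fun x => pd (τ i j k) l x))
    (hperr : ∀ i, BoundaryPeriodic a b (fun x => r x i))
    (hperdr : ∀ i j, BoundaryPeriodic a b (fun x => pd (fun y => r y i) j x)) :
    (∫ x in Set.Icc a b, ∑ i, ∑ j, σ i j x * pd (fun y => r y i) j x)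
      + (∫ x in Set.Icc a b,
          ∑ i, ∑ j, ∑ k, τ i j k x * pd2 (fun y => r y i) j k x) = 0 := by
  classical
  have hab : a ≤ b := by
    intro t; fin_cases t
    exacts [hab0.le, hab1.le]
  have hri : ∀ i, ContDiffOn ℝ 2 (fun y => r y i) U := fun i =>
    (ContinuousLinearMap.proj (R := ℝ) (φ := fun _ : Fin 2 => ℝ) i).contDiff.comp_contDiffOn hr
  have dAt : ∀ {g : (Fin 2 → ℝ) → ℝ}, ContDiffOn ℝ 1 g U →
      ∀ {x : Fin 2 → ℝ}, x ∈ U → DifferentiableAt ℝ g x :=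
    fun h _ hx => (h.contDiffAt (hU.mem_nhds hx)).differentiableAt one_ne_zero
  have hpdτC : ∀ i j k l, ContDiffOn ℝ 1 (pd (τ i j k) l) U := fun i j k l =>
    pd_contDiffOn hU (hτ i j k) l
  have hpdrC : ∀ i j, ContDiffOn ℝ 1 (pd (fun y => r y i) j) U := fun i j =>
    pd_contDiffOn hU (hri i) j
  have hGC : ∀ i m, ContDiffOn ℝ 1 (fun y => σ i m y - ∑ k, pd (τ i m k) k y) U := fun i m =>
    (hσ i m).sub (ContDiffOn.sum fun k _ => hpdτC i m k k)
  set F : Fin 2 → (Fin 2 → ℝ) → ℝ := fun m y =>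
    ∑ i, ((σ i m y - ∑ k, pd (τ i m k) k y) * r y i
        + ∑ j, τ i j m y * pd (fun z => r z i) j y) with hF
  have hFC : ∀ m, ContDiffOn ℝ 1 (F m) U := by
    intro m; rw [hF]
    exact ContDiffOn.sum fun i _ =>
      ((hGC i m).mul ((hri i).of_le one_le_two)).add
        (ContDiffOn.sum fun j _ => ((hτ i j m).of_le one_le_two).mul (hpdrC i j))
  have hFm_pd : ∀ m, ∀ x ∈ U, pd (F m) m x =
      ∑ i, (pd (fun y => σ i m y - ∑ k, pd (τ i m k) k y) m x * r x i
          + (σ i m x - ∑ k, pd (τ i m k) k x) * pd (fun z => r z i) m x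
          + ∑ j, (pd (τ i j m) m x * pd (fun z => r z i) j x
                + τ i j m x * pd2 (fun z => r z i) m j x)) := by
    intro m x hx
    have dG : ∀ i, DifferentiableAt ℝ (fun y => σ i m y - ∑ k, pd (τ i m k) k y) x :=
      fun i => dAt (hGC i m) hx
    have dr : ∀ i, DifferentiableAt ℝ (fun y => r y i) x :=
      fun i => dAt ((hri i).of_le one_le_two) hx
    have dpdr : ∀ i j, DifferentiableAt ℝ (pd (fun y => r y i) j) x :=
      fun i j => dAt (hpdrC i j) hx
    have dτ2 : ∀ i j, DifferentiableAt ℝ (τ i j m) x :=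
      fun i j => dAt ((hτ i j m).of_le one_le_two) hx
    have dsum : ∀ i, DifferentiableAt ℝ (fun y => ∑ j, τ i j m y * pd (fun z => r z i) j y) x :=
      fun i => DifferentiableAt.fun_sum fun j _ => (dτ2 i j).mul (dpdr i j)
    rw [hF]
    rw [pd_sum Finset.univ
      (fun i => fun y => (σ i m y - ∑ k, pd (τ i m k) k y) * r y i
        + ∑ j, τ i j m y * pd (fun z => r z i) j y)
      (fun i _ => (((dG i).mul (dr i)).add (dsum i)))]
    refine Finset.sum_congr rfl fun i _ => ?_
    rw [pd_add ((dG i).fun_mul (dr i)) (dsum i), pd_mul (dG i) (dr i),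
      pd_sum Finset.univ (fun j => fun y => τ i j m y * pd (fun z => r z i) j y)
        (fun j _ => (dτ2 i j).mul (dpdr i j)), add_assoc]
    have hj : ∀ j : Fin 2, pd (fun y => τ i j m y * pd (fun z => r z i) j y) m x
        = pd (τ i j m) m x * pd (fun z => r z i) j x
          + τ i j m x * pd2 (fun z => r z i) m j x :=
      fun j => by rw [pd_mul (dτ2 i j) (dpdr i j)]; rfl
    rw [Finset.sum_congr rfl fun j _ => hj j]
    ring
  have hdiv : ∀ x ∈ Set.Icc a b, (∑ m, pd (F m) m x) =
      (∑ i, ∑ j, σ i j x * pd (fun y => r y i) j x)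
        + (∑ i, ∑ j, ∑ k, τ i j k x * pd2 (fun y => r y i) j k x) := by
    intro x hx
    have hxU : x ∈ U := hvU hx
    have h0 := hequil x hx 0
    have h1 := hequil x hx 1
    have hsym : ∀ i, pd2 (fun y => r y i) 1 0 x = pd2 (fun y => r y i) 0 1 x :=
      fun i => pd2_symm hU (hri i) hxU 1 0
    rw [Fin.sum_univ_two, hFm_pd 0 x hxU, hFm_pd 1 x hxU]
    simp only [Fin.sum_univ_two] at h0 h1 ⊢
    rw [hsym 0, hsym 1]
    linear_combination (r x 0) * h0 + (r x 1) * h1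
  have hperF : ∀ m, BoundaryPeriodic a b (F m) := by
    intro m; rw [hF]
    exact BoundaryPeriodic.sum _ fun i _ =>
      (((hperσ i m).sub (BoundaryPeriodic.sum _ fun k _ => hperdτ i m k k)).mul (hperr i)).add
        (BoundaryPeriodic.sum _ fun j _ => (hperτ i j m).mul (hperdr i j))
  -- integrability of the two integrands
  have hcont1 : ContinuousOn
      (fun x => ∑ i, ∑ j, σ i j x * pd (fun y => r y i) j x) U :=
    continuousOn_finset_sum _ fun i _ => continuousOn_finset_sum _ fun j _ =>
      ((hσ i j).continuousOn).mul (hpdrC i j).continuousOn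
  have hcont2 : ContinuousOn
      (fun x => ∑ i, ∑ j, ∑ k, τ i j k x * pd2 (fun y => r y i) j k x) U :=
    continuousOn_finset_sum _ fun i _ => continuousOn_finset_sum _ fun j _ =>
      continuousOn_finset_sum _ fun k _ =>
        ((hτ i j k).continuousOn).mul (pd_continuousOn hU (hpdrC i k) j)
  have hInt1 : IntegrableOn
      (fun x => ∑ i, ∑ j, σ i j x * pd (fun y => r y i) j x) (Set.Icc a b) :=
    (hcont1.mono hvU).integrableOn_compact isCompact_Icc
  have hInt2 : IntegrableOn
      (fun x => ∑ i, ∑ j, ∑ k, τ i j k x * pd2 (fun y => r y i) j k x) (Set.Icc a b) :=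
    (hcont2.mono hvU).integrableOn_compact isCompact_Icc
  -- divergence theorem
  have Hd : ∀ x ∈ (Set.pi Set.univ fun i => Set.Ioo (a i) (b i)) \ (∅ : Set (Fin 2 → ℝ)),
      ∀ m, HasFDerivAt (F m) (fderiv ℝ (F m) x) x := by
    intro x hx m
    have hxIcc : x ∈ Set.Icc a b := by
      rw [← Set.pi_univ_Icc]
      exact Set.pi_mono (fun i _ => Set.Ioo_subset_Icc_self) hx.1
    exact (dAt (hFC m) (hvU hxIcc)).hasFDerivAt
  have Hi : IntegrableOn (fun x => ∑ m, fderiv ℝ (F m) x (Pi.single m 1)) (Set.Icc a b) := by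
    refine ((continuousOn_finset_sum _ fun m _ => ?_).mono hvU).integrableOn_compact isCompact_Icc
    exact ((hFC m).continuousOn_fderiv_of_isOpen hU le_rfl).clm_apply continuousOn_const
  have hdivthm := integral_divergence_of_hasFDerivAt_off_countable' a b hab F
    (fun m x => fderiv ℝ (F m) x) ∅ Set.countable_empty
    (fun m => ((hFC m).continuousOn).mono hvU) Hd Hi
  -- the faces cancel
  have hfaces : (∑ i : Fin 2,
      ((∫ x in Set.Icc (a ∘ Fin.succAbove i) (b ∘ Fin.succAbove i),
          F i (Fin.insertNth i (b i) x)) -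
        ∫ x in Set.Icc (a ∘ Fin.succAbove i) (b ∘ Fin.succAbove i),
          F i (Fin.insertNth i (a i) x))) = 0 := by
    rw [Fin.sum_univ_two]
    have e0 : (∫ x in Set.Icc (a ∘ Fin.succAbove 0) (b ∘ Fin.succAbove 0),
        F 0 (Fin.insertNth 0 (b 0) x)) =
        ∫ x in Set.Icc (a ∘ Fin.succAbove 0) (b ∘ Fin.succAbove 0),
          F 0 (Fin.insertNth 0 (a 0) x) := by
      refine setIntegral_congr_fun measurableSet_Icc fun x hx => ?_
      rw [insertNth_zero_eq, insertNth_zero_eq]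
      exact (hperF 0).1 (x 0) ⟨hx.1 0, hx.2 0⟩
    have e1 : (∫ x in Set.Icc (a ∘ Fin.succAbove 1) (b ∘ Fin.succAbove 1),
        F 1 (Fin.insertNth 1 (b 1) x)) =
        ∫ x in Set.Icc (a ∘ Fin.succAbove 1) (b ∘ Fin.succAbove 1),
          F 1 (Fin.insertNth 1 (a 1) x) := by
      refine setIntegral_congr_fun measurableSet_Icc fun x hx => ?_
      rw [insertNth_one_eq, insertNth_one_eq]
      exact (hperF 1).2 (x 0) ⟨hx.1 0, hx.2 0⟩
    rw [e0, e1]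
    ring
  calc (∫ x in Set.Icc a b, ∑ i, ∑ j, σ i j x * pd (fun y => r y i) j x)
      + (∫ x in Set.Icc a b, ∑ i, ∑ j, ∑ k, τ i j k x * pd2 (fun y => r y i) j k x)
      = ∫ x in Set.Icc a b,
          ((∑ i, ∑ j, σ i j x * pd (fun y => r y i) j x)
            + ∑ i, ∑ j, ∑ k, τ i j k x * pd2 (fun y => r y i) j k x) :=
        (integral_add hInt1 hInt2).symm
    _ = ∫ x in Set.Icc a b, ∑ m, fderiv ℝ (F m) x (Pi.single m 1) := by
        refine setIntegral_congr_fun measurableSet_Icc fun x hx => ?_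
        exact (hdiv x hx).symm
    _ = 0 := by rw [hdivthm]; exact hfaces
end

section
/- (Hill–Mandel macrohomogeneity condition, mechanical part.) Assume the RVE domain v has its centroid at the origin (∫_v x dv = 0). Let δε_M be a 2×2 real matrix, δg_M a minor-symmetric third-order tensor, and δr : ℝ² → ℝ² twice continuously differentiable on a neighbourhood of v; define the microscopic displacement variation (δu_m)_i(x) = Σ_j (δε_M)_{ij} x_j + (1/2) Σ_{j,k} (δg_M)_{ijk} x_j x_k + δr_i(x). Let σ (matrix field) and τ (third-order tensor field) be continuous on v, and suppose the microfluctuation condition ∫_v Σ_{i,j} σ_{ij} ∂δr_i/∂x_j dv + ∫_v Σ_{i,j,k} τ_{ijk} ∂²δr_i/(∂x_j ∂x_k) dv = 0 holds. Define the homogenized stresses (σ_M)_{ij} = (1/V)∫_v σ_{ij} dv and (τ_M)_{ijk} = (1/V)∫_v (τ_{ijk} + σ_{ij} x_k) dv. Then (1/V) ∫_v ( Σ_{i,j} σ_{ij} ∂(δu_m)_i/∂x_j + Σ_{i,j,k} τ_{ijk} ∂²(δu_m)_i/(∂x_j ∂x_k) ) dv = Σ_{i,j} (σ_M)_{ij}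 (δε_M)_{ij} + Σ_{i,j,k} (τ_M)_{ijk} (δg_M)_{ijk}. -/
open MeasureTheory

lemma pd_formula (c : Fin 2 → ℝ) (q : Fin 2 → Fin 2 → ℝ) (r : (Fin 2 → ℝ) → ℝ)
    (x : Fin 2 → ℝ) (hr : DifferentiableAt ℝ r x) (j : Fin 2) :
    pd (fun y => (∑ m, c m * y m) + (1/2) * (∑ m, ∑ k, q m k * y m * y k) + r y) j x
      = c j + (1/2) * ((∑ k, q j k * x k) + (∑ m, q m j * x m)) + pd r j x := by
  have hL : HasFDerivAt (fun y : Fin 2 → ℝ => ∑ m, c m * y m)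
      (∑ m, c m • (ContinuousLinearMap.proj m : (Fin 2 → ℝ) →L[ℝ] ℝ)) x :=
    HasFDerivAt.fun_sum fun m _ => (hasFDerivAt_apply (𝕜 := ℝ) m x).const_mul (c m)
  have hQ : HasFDerivAt (fun y : Fin 2 → ℝ => (1/2 : ℝ) * (∑ m, ∑ k, q m k * y m * y k))
      ((1/2 : ℝ) • (∑ m, ∑ k, q m k • (x m • (ContinuousLinearMap.proj k : (Fin 2 → ℝ) →L[ℝ] ℝ)
        + x k • (ContinuousLinearMap.proj m : (Fin 2 → ℝ) →L[ℝ] ℝ)))) x := by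
    refine HasFDerivAt.const_mul ?_ _
    refine HasFDerivAt.fun_sum fun m _ => HasFDerivAt.fun_sum fun k _ => ?_
    have := ((hasFDerivAt_apply (𝕜 := ℝ) m x).mul (hasFDerivAt_apply (𝕜 := ℝ) k x)).const_mul (q m k)
    simpa [mul_assoc, smul_add] using this
  have hT := (hL.fun_add hQ).fun_add hr.hasFDerivAt
  rw [show pd (fun y => (∑ m, c m * y m) + (1/2) * (∑ m, ∑ k, q m k * y m * y k) + r y) j x
      = (fderiv ℝ (fun y => (∑ m, c m * y m) + (1/2) * (∑ m, ∑ k, q m k * y m * y k) + r y) x)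
        (Pi.single j 1) from rfl, hT.fderiv]
  simp only [ContinuousLinearMap.add_apply, ContinuousLinearMap.smul_apply,
    ContinuousLinearMap.coe_sum', Finset.sum_apply, ContinuousLinearMap.proj_apply,
    Pi.single_apply, smul_eq_mul, mul_ite, mul_one, mul_zero, Finset.sum_ite_eq',
    Finset.mem_univ, if_true, pd]
  fin_cases j <;> simp [Fin.sum_univ_two] <;> ring

lemma pd_affine (A : ℝ) (q : Fin 2 → ℝ) (s : (Fin 2 → ℝ) → ℝ)
    (x : Fin 2 → ℝ) (hs : DifferentiableAt ℝ s x) (j : Fin 2) :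
    pd (fun y => A + (∑ l, q l * y l) + s y) j x = q j + pd s j x := by
  have hL : HasFDerivAt (fun y : Fin 2 → ℝ => A + ∑ l, q l * y l)
      ((0 : (Fin 2 → ℝ) →L[ℝ] ℝ) + ∑ l, q l • (ContinuousLinearMap.proj l : (Fin 2 → ℝ) →L[ℝ] ℝ)) x :=
    (hasFDerivAt_const A x).add
      (HasFDerivAt.fun_sum fun l _ => (hasFDerivAt_apply (𝕜 := ℝ) l x).const_mul (q l))
  have hT := hL.fun_add hs.hasFDerivAt
  rw [show pd (fun y => A + (∑ l, q l * y l) + s y) j x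
      = (fderiv ℝ (fun y => A + (∑ l, q l * y l) + s y) x) (Pi.single j 1) from rfl, hT.fderiv]
  simp only [ContinuousLinearMap.add_apply, ContinuousLinearMap.smul_apply,
    ContinuousLinearMap.coe_sum', Finset.sum_apply, ContinuousLinearMap.proj_apply,
    ContinuousLinearMap.zero_apply, Pi.single_apply, smul_eq_mul, mul_ite, mul_one, mul_zero,
    Finset.sum_ite_eq', Finset.mem_univ, if_true, pd, zero_add]

/-- Hill–Mandel, mechanical part: for the microscopic displacement variation
`(δu_m)_i(x) = Σ_j (δε_M)_{ij} x_j + (1/2) Σ_{j,k} (δg_M)_{ijk} x_j x_k + δr_i(x)` on an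
RVE centred at the origin, whenever the microfluctuation work vanishes, the volume average
of the microscopic internal virtual work equals the macroscopic one:
`(1/V)∫_v (σ:δε_m + τ∶δg_m) = σ_M:δε_M + τ_M∶δg_M`. -/
theorem hill_mandel_mechanical
    (a b : Fin 2 → ℝ) (hab0 : a 0 < b 0) (hab1 : a 1 < b 1)
    (V : ℝ) (hV : V = (b 0 - a 0) * (b 1 - a 1))
    (hcent : (∫ x in Set.Icc a b, x) = (0 : Fin 2 → ℝ))
    (δεM : Fin 2 → Fin 2 → ℝ) (δgM : Fin 2 → Fin 2 → Fin 2 → ℝ)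
    (hδgM : ∀ i j k, δgM i j k = δgM i k j)
    (U : Set (Fin 2 → ℝ)) (hU : IsOpen U) (hvU : Set.Icc a b ⊆ U)
    (δr : (Fin 2 → ℝ) → Fin 2 → ℝ) (hδr : ContDiffOn ℝ 2 δr U)
    (δum : (Fin 2 → ℝ) → Fin 2 → ℝ)
    (hδum : ∀ x i, δum x i =
        (∑ j, δεM i j * x j) + (1/2) * (∑ j, ∑ k, δgM i j k * x j * x k) + δr x i)
    (σ : Fin 2 → Fin 2 → (Fin 2 → ℝ) → ℝ)
    (hσ : ∀ i j, ContinuousOn (σ i j) (Set.Icc a b))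
    (τ : Fin 2 → Fin 2 → Fin 2 → (Fin 2 → ℝ) → ℝ)
    (hτ : ∀ i j k, ContinuousOn (τ i j k) (Set.Icc a b))
    (hmicro : (∫ x in Set.Icc a b, ∑ i, ∑ j, σ i j x * pd (fun y => δr y i) j x)
        + (∫ x in Set.Icc a b,
            ∑ i, ∑ j, ∑ k, τ i j k x * pd2 (fun y => δr y i) j k x) = 0)
    (σM : Fin 2 → Fin 2 → ℝ)
    (hσM : ∀ i j, σM i j = (1/V) * ∫ x in Set.Icc a b, σ i j x)
    (τM : Fin 2 → Fin 2 → Fin 2 → ℝ)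
    (hτM : ∀ i j k, τM i j k = (1/V) * ∫ x in Set.Icc a b, (τ i j k x + σ i j x * x k)) :
    (1/V) * ∫ x in Set.Icc a b,
        ((∑ i, ∑ j, σ i j x * pd (fun y => δum y i) j x)
          + ∑ i, ∑ j, ∑ k, τ i j k x * pd2 (fun y => δum y i) j k x)
      = (∑ i, ∑ j, σM i j * δεM i j) + ∑ i, ∑ j, ∑ k, τM i j k * δgM i j k := by
  have hδri : ∀ i, ContDiffOn ℝ 2 (fun y => δr y i) U := fun i => contDiffOn_pi.mp hδr i
  have hdiffr : ∀ i, ∀ x ∈ U, DifferentiableAt ℝ (fun y => δr y i) x := fun i x hx =>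
    ((hδri i).contDiffAt (hU.mem_nhds hx)).differentiableAt (by norm_num)
  have hpdr_diff : ∀ i k, ∀ x ∈ U,
      DifferentiableAt ℝ (fun y => pd (fun z => δr z i) k y) x := by
    intro i k x hx
    have h2 : ContDiffAt ℝ 2 (fun y => δr y i) x := (hδri i).contDiffAt (hU.mem_nhds hx)
    have h1 : ContDiffAt ℝ 1 (fderiv ℝ fun y => δr y i) x := h2.fderiv_right (by norm_num)
    exact (h1.clm_apply contDiffAt_const).differentiableAt one_ne_zero
  -- first derivative formula
  have hpd1 : ∀ i j, ∀ x ∈ U, pd (fun y => δum y i) j x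
      = δεM i j + (∑ k, δgM i j k * x k) + pd (fun y => δr y i) j x := by
    intro i j x hx
    have hfun : (fun y => δum y i) = fun y =>
        (∑ m, δεM i m * y m) + (1/2) * (∑ m, ∑ k, δgM i m k * y m * y k) + δr y i :=
      funext fun y => hδum y i
    rw [hfun, pd_formula _ _ _ _ (hdiffr i x hx) j]
    have hsym : (∑ m, δgM i m j * x m) = ∑ k, δgM i j k * x k := by
      refine Finset.sum_congr rfl fun m _ => ?_
      rw [hδgM i m j]
    rw [hsym]; ring
  -- second derivative formula
  have hpd2 : ∀ i j k, ∀ x ∈ U, pd2 (fun y => δum y i) j k x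
      = δgM i j k + pd2 (fun y => δr y i) j k x := by
    intro i j k x hx
    have hEq : (fun y => pd (fun z => δum z i) k y) =ᶠ[nhds x]
        (fun y => δεM i k + (∑ l, δgM i k l * y l) + pd (fun z => δr z i) k y) := by
      filter_upwards [hU.mem_nhds hx] with y hy
      exact hpd1 i k y hy
    have h1 : pd2 (fun y => δum y i) j k x
        = pd (fun y => δεM i k + (∑ l, δgM i k l * y l) + pd (fun z => δr z i) k y) j x := by
      show (fderiv ℝ (fun y => pd (fun z => δum z i) k y) x) (Pi.single j 1) = _
      rw [hEq.fderiv_eq]; rfl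
    rw [h1, pd_affine _ _ _ _ (hpdr_diff i k x hx) j, hδgM i j k]
    rfl
  -- continuity of derivatives of δr
  have hpdr_cont : ∀ i k, ContinuousOn (fun y => pd (fun z => δr z i) k y) (Set.Icc a b) :=
    fun i k x hx => ((hpdr_diff i k x (hvU hx)).continuousAt).continuousWithinAt
  have hpd2_cont : ∀ i j k, ContinuousOn (fun y => pd2 (fun z => δr z i) j k y)
      (Set.Icc a b) := by
    intro i j k
    have hg : ContDiffOn ℝ 1 (fun y => pd (fun z => δr z i) k y) U := by
      intro x hx
      have h2 : ContDiffAt ℝ 2 (fun y => δr y i) x := (hδri i).contDiffAt (hU.mem_nhds hx)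
      exact ((h2.fderiv_right (by norm_num)).clm_apply contDiffAt_const).contDiffWithinAt
    have hcont := hg.continuousOn_fderiv_of_isOpen hU le_rfl
    have : ContinuousOn (fun y => pd2 (fun z => δr z i) j k y) U := by
      have := ((ContinuousLinearMap.apply ℝ ℝ (Pi.single j 1)).continuous).comp_continuousOn hcont
      exact this
    exact this.mono hvU
  -- integrability
  have hK : IsCompact (Set.Icc a b) := isCompact_Icc
  have hIσ : ∀ i j, IntegrableOn (σ i j) (Set.Icc a b) := fun i j =>
    (hσ i j).integrableOn_compact hK
  have hIσx : ∀ i j k, IntegrableOn (fun x => σ i j x * x k) (Set.Icc a b) := fun i j k =>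
    ((hσ i j).mul ((continuous_apply k).continuousOn)).integrableOn_compact hK
  have hIσpd : ∀ i j, IntegrableOn (fun x => σ i j x * pd (fun y => δr y i) j x)
      (Set.Icc a b) := fun i j => ((hσ i j).mul (hpdr_cont i j)).integrableOn_compact hK
  have hIτ : ∀ i j k, IntegrableOn (τ i j k) (Set.Icc a b) := fun i j k =>
    (hτ i j k).integrableOn_compact hK
  have hIτpd2 : ∀ i j k, IntegrableOn (fun x => τ i j k x * pd2 (fun y => δr y i) j k x)
      (Set.Icc a b) := fun i j k =>
    ((hτ i j k).mul (hpd2_cont i j k)).integrableOn_compact hK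
  -- integrand rewriting
  have hInteg : Set.EqOn (fun x =>
      ((∑ i, ∑ j, σ i j x * pd (fun y => δum y i) j x)
        + ∑ i, ∑ j, ∑ k, τ i j k x * pd2 (fun y => δum y i) j k x))
      (fun x =>
      ((∑ i, ∑ j, σ i j x * δεM i j)
        + (∑ i, ∑ j, ∑ k, σ i j x * x k * δgM i j k)
        + (∑ i, ∑ j, σ i j x * pd (fun y => δr y i) j x)
        + ((∑ i, ∑ j, ∑ k, τ i j k x * δgM i j k)
        + (∑ i, ∑ j, ∑ k, τ i j k x * pd2 (fun y => δr y i) j k x))))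
      (Set.Icc a b) := by
    intro x hx
    have hxU := hvU hx
    have h1 : ∀ i j, σ i j x * pd (fun y => δum y i) j x
        = σ i j x * δεM i j + (∑ k, σ i j x * x k * δgM i j k)
          + σ i j x * pd (fun y => δr y i) j x := by
      intro i j
      rw [hpd1 i j x hxU, mul_add, mul_add, Finset.mul_sum]
      congr 2
      exact Finset.sum_congr rfl fun k _ => by ring
    have h2 : ∀ i j k, τ i j k x * pd2 (fun y => δum y i) j k x
        = τ i j k x * δgM i j k + τ i j k x * pd2 (fun y => δr y i) j k x := by
      intro i j k
      rw [hpd2 i j k x hxU, mul_add]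
    simp only [h1, h2, Finset.sum_add_distrib]
  -- main computation
  have H1 : IntegrableOn (fun x => ∑ i, ∑ j, σ i j x * δεM i j) (Set.Icc a b) :=
    integrable_finset_sum _ fun i _ => integrable_finset_sum _ fun j _ =>
      (hIσ i j).mul_const (δεM i j)
  have H2 : IntegrableOn (fun x => ∑ i, ∑ j, ∑ k, σ i j x * x k * δgM i j k)
      (Set.Icc a b) :=
    integrable_finset_sum _ fun i _ => integrable_finset_sum _ fun j _ =>
      integrable_finset_sum _ fun k _ => (hIσx i j k).mul_const (δgM i j k)
  have H3 : IntegrableOn (fun x => ∑ i, ∑ j, σ i j x * pd (fun y => δr y i) j x)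
      (Set.Icc a b) :=
    integrable_finset_sum _ fun i _ => integrable_finset_sum _ fun j _ => hIσpd i j
  have H4 : IntegrableOn (fun x => ∑ i, ∑ j, ∑ k, τ i j k x * δgM i j k) (Set.Icc a b) :=
    integrable_finset_sum _ fun i _ => integrable_finset_sum _ fun j _ =>
      integrable_finset_sum _ fun k _ => (hIτ i j k).mul_const (δgM i j k)
  have H5 : IntegrableOn (fun x => ∑ i, ∑ j, ∑ k, τ i j k x * pd2 (fun y => δr y i) j k x)
      (Set.Icc a b) :=
    integrable_finset_sum _ fun i _ => integrable_finset_sum _ fun j _ =>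
      integrable_finset_sum _ fun k _ => hIτpd2 i j k
  have H12 : IntegrableOn (fun x => (∑ i, ∑ j, σ i j x * δεM i j)
      + (∑ i, ∑ j, ∑ k, σ i j x * x k * δgM i j k)) (Set.Icc a b) := H1.add H2
  have H123 : IntegrableOn (fun x => (∑ i, ∑ j, σ i j x * δεM i j)
      + (∑ i, ∑ j, ∑ k, σ i j x * x k * δgM i j k)
      + (∑ i, ∑ j, σ i j x * pd (fun y => δr y i) j x)) (Set.Icc a b) := H12.add H3
  have H45 : IntegrableOn (fun x => (∑ i, ∑ j, ∑ k, τ i j k x * δgM i j k)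
      + (∑ i, ∑ j, ∑ k, τ i j k x * pd2 (fun y => δr y i) j k x)) (Set.Icc a b) := H4.add H5
  have hmeas : MeasurableSet (Set.Icc a b) := measurableSet_Icc
  rw [setIntegral_congr_fun hmeas hInteg,
    integral_add H123 H45, integral_add H12 H3, integral_add H1 H2, integral_add H4 H5]
  have hADD : ∀ i j k, (∫ x in Set.Icc a b, (τ i j k x + σ i j x * x k))
      = (∫ x in Set.Icc a b, τ i j k x) + ∫ x in Set.Icc a b, σ i j x * x k :=
    fun i j k => integral_add (hIτ i j k) (hIσx i j k)
  have e1 : (∫ x in Set.Icc a b, ∑ i, ∑ j, σ i j x * δεM i j)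
      = ∑ i, ∑ j, (∫ x in Set.Icc a b, σ i j x) * δεM i j := by
    rw [integral_finset_sum _ fun i _ => integrable_finset_sum _ fun j _ =>
      (hIσ i j).mul_const (δεM i j)]
    refine Finset.sum_congr rfl fun i _ => ?_
    rw [integral_finset_sum _ fun j _ => (hIσ i j).mul_const (δεM i j)]
    exact Finset.sum_congr rfl fun j _ => integral_mul_const _ _
  have e2 : (∫ x in Set.Icc a b, ∑ i, ∑ j, ∑ k, σ i j x * x k * δgM i j k)
      = ∑ i, ∑ j, ∑ k, (∫ x in Set.Icc a b, σ i j x * x k) * δgM i j k := by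
    rw [integral_finset_sum _ fun i _ => integrable_finset_sum _ fun j _ =>
      integrable_finset_sum _ fun k _ => (hIσx i j k).mul_const (δgM i j k)]
    refine Finset.sum_congr rfl fun i _ => ?_
    rw [integral_finset_sum _ fun j _ => integrable_finset_sum _ fun k _ =>
      (hIσx i j k).mul_const (δgM i j k)]
    refine Finset.sum_congr rfl fun j _ => ?_
    rw [integral_finset_sum _ fun k _ => (hIσx i j k).mul_const (δgM i j k)]
    exact Finset.sum_congr rfl fun k _ => integral_mul_const _ _
  have e4 : (∫ x in Set.Icc a b, ∑ i, ∑ j, ∑ k, τ i j k x * δgM i j k)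
      = ∑ i, ∑ j, ∑ k, (∫ x in Set.Icc a b, τ i j k x) * δgM i j k := by
    rw [integral_finset_sum _ fun i _ => integrable_finset_sum _ fun j _ =>
      integrable_finset_sum _ fun k _ => (hIτ i j k).mul_const (δgM i j k)]
    refine Finset.sum_congr rfl fun i _ => ?_
    rw [integral_finset_sum _ fun j _ => integrable_finset_sum _ fun k _ =>
      (hIτ i j k).mul_const (δgM i j k)]
    refine Finset.sum_congr rfl fun j _ => ?_
    rw [integral_finset_sum _ fun k _ => (hIτ i j k).mul_const (δgM i j k)]
    exact Finset.sum_congr rfl fun k _ => integral_mul_const _ _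
  rw [e1, e2, e4]
  have r1 : (∑ i, ∑ j, σM i j * δεM i j)
      = (1/V) * ∑ i, ∑ j, (∫ x in Set.Icc a b, σ i j x) * δεM i j := by
    simp only [hσM, Finset.mul_sum]
    exact Finset.sum_congr rfl fun i _ => Finset.sum_congr rfl fun j _ => by ring
  have r2 : (∑ i, ∑ j, ∑ k, τM i j k * δgM i j k)
      = (1/V) * ((∑ i, ∑ j, ∑ k, (∫ x in Set.Icc a b, τ i j k x) * δgM i j k)
        + (∑ i, ∑ j, ∑ k, (∫ x in Set.Icc a b, σ i j x * x k) * δgM i j k)) := by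
    simp only [hτM, hADD, Finset.mul_sum, ← Finset.sum_add_distrib]
    exact Finset.sum_congr rfl fun i _ => Finset.sum_congr rfl fun j _ =>
      Finset.sum_congr rfl fun k _ => by ring
  rw [r1, r2]
  linear_combination (1/V) * hmicro
end

section
/- (Full Hill–Mandel energy condition for flexoelectricity.) Assume the RVE domain v has its centroid at the origin (∫_v x dv = 0). Let δε_M be a 2×2 real matrix, δg_M a minor-symmetric third-order tensor, δE_M ∈ ℝ², δr : ℝ² → ℝ² a C² vector field and δr_φ : ℝ² → ℝ a C¹ scalar field on a neighbourhood of v. Define (δu_m)_i(x) = Σ_j (δε_M)_{ij} x_j + (1/2) Σ_{j,k} (δg_M)_{ijk} x_j x_k + δr_i(x) and δφ_m(x) = −Σ_i (δE_M)_i x_i + δr_φ(x), with δE_m = −∇δφ_m. Let σ (matrix field), τ (third-order tensor field) and D (vector field) be continuous on v and satisfy the microfluctuation conditions ∫_v Σ_{i,j} σ_{ij} ∂δr_i/∂x_j dv + ∫_v Σ_{i,j,k} τ_{ijk} ∂²δr_i/(∂x_j∂x_k) dv = 0 and ∫_v Σ_i D_i ∂δr_φ/∂x_i dv = 0. Define (σ_M)_{ij}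 = (1/V)∫_v σ_{ij} dv, (τ_M)_{ijk} = (1/V)∫_v (τ_{ijk} + σ_{ij} x_k) dv, and D_M = (1/V)∫_v D dv. Then (1/V) ∫_v ( Σ_{i,j} σ_{ij} ∂(δu_m)_i/∂x_j + Σ_{i,j,k} τ_{ijk} ∂²(δu_m)_i/(∂x_j∂x_k) − Σ_i D_i (δE_m)_i ) dv = Σ_{i,j} (σ_M)_{ij} (δε_M)_{ij} + Σ_{i,j,k} (τ_M)_{ijk} (δg_M)_{ijk} − Σ_i (D_M)_i (δE_M)_i. -/
open MeasureTheory

namespace HMaux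

lemma pd_eq {f : (Fin 2 → ℝ) → ℝ} {f' : (Fin 2 → ℝ) →L[ℝ] ℝ} {x : Fin 2 → ℝ}
    (h : HasFDerivAt f f' x) (j : Fin 2) : pd f j x = f' (Pi.single j 1) := by
  rw [pd, h.fderiv]

lemma pd_add {f g : (Fin 2 → ℝ) → ℝ} {x : Fin 2 → ℝ}
    (hf : DifferentiableAt ℝ f x) (hg : DifferentiableAt ℝ g x) (j : Fin 2) :
    pd (fun y => f y + g y) j x = pd f j x + pd g j x := by
  simp [pd, fderiv_fun_add hf hg]

lemma pd_congr {f g : (Fin 2 → ℝ) → ℝ} {x : Fin 2 → ℝ}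
    (h : f =ᶠ[nhds x] g) (j : Fin 2) : pd f j x = pd g j x := by
  rw [pd, pd, h.fderiv_eq]

lemma hasFDerivAt_proj (j : Fin 2) (x : Fin 2 → ℝ) :
    HasFDerivAt (fun y : Fin 2 → ℝ => y j)
      (ContinuousLinearMap.proj j : (Fin 2 → ℝ) →L[ℝ] ℝ) x :=
  (ContinuousLinearMap.proj j : (Fin 2 → ℝ) →L[ℝ] ℝ).hasFDerivAt

lemma hasFDerivAt_lin (c : Fin 2 → ℝ) (x : Fin 2 → ℝ) :
    HasFDerivAt (fun y : Fin 2 → ℝ => ∑ j, c j * y j)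
      (∑ j, c j • (ContinuousLinearMap.proj j : (Fin 2 → ℝ) →L[ℝ] ℝ)) x :=
  HasFDerivAt.fun_sum fun j _ => (hasFDerivAt_proj j x).const_mul (c j)

lemma pd_affine (a : ℝ) (c : Fin 2 → ℝ) (x : Fin 2 → ℝ) (j : Fin 2) :
    pd (fun y => a + ∑ p, c p * y p) j x = c j := by
  rw [pd_eq ((hasFDerivAt_const a x).fun_add (hasFDerivAt_lin c x)) j]
  fin_cases j <;>
  simp [Fin.sum_univ_two, Pi.single_apply]

noncomputable def polyQ (c : Fin 2 → ℝ) (g : Fin 2 → Fin 2 → ℝ) (y : Fin 2 → ℝ) : ℝ :=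
  (∑ p, c p * y p) + (1/2) * (∑ p, ∑ q, g p q * y p * y q)

lemma hasFDerivAt_polyQ (c : Fin 2 → ℝ) (g : Fin 2 → Fin 2 → ℝ) (x : Fin 2 → ℝ) :
    HasFDerivAt (polyQ c g)
      ((∑ j, c j • (ContinuousLinearMap.proj j : (Fin 2 → ℝ) →L[ℝ] ℝ))
        + (1/2 : ℝ) • (∑ j, ∑ k, ((g j k * x j) • (ContinuousLinearMap.proj k : (Fin 2 → ℝ) →L[ℝ] ℝ)
            + x k • (g j k • (ContinuousLinearMap.proj j : (Fin 2 → ℝ) →L[ℝ] ℝ))))) x := by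
  refine (hasFDerivAt_lin c x).add (HasFDerivAt.const_mul ?_ (1/2 : ℝ))
  exact HasFDerivAt.fun_sum fun j _ => HasFDerivAt.fun_sum fun k _ =>
    (((hasFDerivAt_proj j x).const_mul (g j k)).mul (hasFDerivAt_proj k x))

lemma pd_polyQ (c : Fin 2 → ℝ) (g : Fin 2 → Fin 2 → ℝ) (hg : ∀ p q, g p q = g q p)
    (x : Fin 2 → ℝ) (j : Fin 2) :
    pd (polyQ c g) j x = c j + ∑ k, g j k * x k := by
  rw [pd_eq (hasFDerivAt_polyQ c g x) j]
  fin_cases j <;>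
  · simp [Fin.sum_univ_two, Pi.single_apply]
    rw [hg 1 0]
    ring


lemma differentiableAt_polyQ (c : Fin 2 → ℝ) (g : Fin 2 → Fin 2 → ℝ) (x : Fin 2 → ℝ) :
    DifferentiableAt ℝ (polyQ c g) x :=
  (hasFDerivAt_polyQ c g x).differentiableAt

lemma differentiableAt_pd {f : (Fin 2 → ℝ) → ℝ} {x : Fin 2 → ℝ}
    (hf : ContDiffAt ℝ 2 f x) (k : Fin 2) :
    DifferentiableAt ℝ (fun y => pd f k y) x := by
  have h1 : ContDiffAt ℝ 1 (fderiv ℝ f) x := hf.fderiv_right (by norm_num)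
  exact (h1.differentiableAt (by norm_num)).clm_apply (differentiableAt_const _)

lemma pd_polyQ_add {c : Fin 2 → ℝ} {g : Fin 2 → Fin 2 → ℝ} {r : (Fin 2 → ℝ) → ℝ}
    {x : Fin 2 → ℝ} (hr : DifferentiableAt ℝ r x) (hg : ∀ p q, g p q = g q p) (j : Fin 2) :
    pd (fun y => polyQ c g y + r y) j x = (c j + ∑ k, g j k * x k) + pd r j x := by
  rw [pd_add (differentiableAt_polyQ c g x) hr, pd_polyQ c g hg]

lemma pd2_polyQ_add {c : Fin 2 → ℝ} {g : Fin 2 → Fin 2 → ℝ} {r : (Fin 2 → ℝ) → ℝ}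
    {x : Fin 2 → ℝ} {U : Set (Fin 2 → ℝ)} (hU : IsOpen U) (hx : x ∈ U)
    (hr : ∀ y ∈ U, ContDiffAt ℝ 2 r y) (hg : ∀ p q, g p q = g q p) (j k : Fin 2) :
    pd2 (fun y => polyQ c g y + r y) j k x = g j k + pd2 r j k x := by
  unfold pd2
  have hev : (fun y => pd (fun z => polyQ c g z + r z) k y)
      =ᶠ[nhds x] (fun y => (c k + ∑ q, g k q * y q) + pd r k y) := by
    filter_upwards [hU.mem_nhds hx] with y hy
    rw [pd_add (differentiableAt_polyQ c g y) ((hr y hy).differentiableAt (by norm_num)),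
      pd_polyQ c g hg]
  rw [pd_congr hev j,
    pd_add ((hasFDerivAt_const (c k) x).fun_add (hasFDerivAt_lin (g k) x)).differentiableAt
      (differentiableAt_pd (hr x hx) k) j,
    pd_affine, hg k j]

lemma continuousOn_pd {f : (Fin 2 → ℝ) → ℝ} {U : Set (Fin 2 → ℝ)} (hU : IsOpen U)
    (hf : ContDiffOn ℝ 1 f U) (k : Fin 2) :
    ContinuousOn (fun y => pd f k y) U :=
  (hf.continuousOn_fderiv_of_isOpen hU le_rfl).clm_apply continuousOn_const

lemma contDiffOn_pd {f : (Fin 2 → ℝ) → ℝ} {U : Set (Fin 2 → ℝ)} (hU : IsOpen U)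
    (hf : ContDiffOn ℝ 2 f U) (k : Fin 2) :
    ContDiffOn ℝ 1 (fun y => pd f k y) U :=
  (hf.fderiv_of_isOpen hU (by norm_num)).clm_apply contDiffOn_const

lemma continuousOn_pd2 {f : (Fin 2 → ℝ) → ℝ} {U : Set (Fin 2 → ℝ)} (hU : IsOpen U)
    (hf : ContDiffOn ℝ 2 f U) (j k : Fin 2) :
    ContinuousOn (fun y => pd2 f j k y) U :=
  continuousOn_pd hU (contDiffOn_pd hU hf k) j

end HMaux


/-- full Hill–Mandel energy condition for flexoelectricity: with
`(δu_m)_i(x) = Σ_j (δε_M)_{ij} x_j + (1/2) Σ_{j,k} (δg_M)_{ijk} x_j x_k + δr_i(x)`,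
`δφ_m(x) = −Σ_i (δE_M)_i x_i + δr_φ(x)`, `δE_m = −∇δφ_m`, and vanishing mechanical and
electrical microfluctuation terms, the volume average of the microscopic virtual energy
equals the macroscopic one:
`(1/V)∫_v (σ:δε_m + τ∶δg_m − D·δE_m) = σ_M:δε_M + τ_M∶δg_M − D_M·δE_M`. -/
theorem hill_mandel_flexoelectric
    (a b : Fin 2 → ℝ) (hab0 : a 0 < b 0) (hab1 : a 1 < b 1)
    (V : ℝ) (hV : V = (b 0 - a 0) * (b 1 - a 1))
    (hcent : (∫ x in Set.Icc a b, x) = (0 : Fin 2 → ℝ))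
    (δεM : Fin 2 → Fin 2 → ℝ) (δgM : Fin 2 → Fin 2 → Fin 2 → ℝ)
    (hδgM : ∀ i j k, δgM i j k = δgM i k j)
    (δEM : Fin 2 → ℝ)
    (U : Set (Fin 2 → ℝ)) (hU : IsOpen U) (hvU : Set.Icc a b ⊆ U)
    (δr : (Fin 2 → ℝ) → Fin 2 → ℝ) (hδr : ContDiffOn ℝ 2 δr U)
    (δrφ : (Fin 2 → ℝ) → ℝ) (hδrφ : ContDiffOn ℝ 1 δrφ U)
    (δum : (Fin 2 → ℝ) → Fin 2 → ℝ)
    (hδum : ∀ x i, δum x i =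
        (∑ j, δεM i j * x j) + (1/2) * (∑ j, ∑ k, δgM i j k * x j * x k) + δr x i)
    (δφm : (Fin 2 → ℝ) → ℝ)
    (hδφm : ∀ x, δφm x = -(∑ i, δEM i * x i) + δrφ x)
    (δEm : Fin 2 → (Fin 2 → ℝ) → ℝ)
    (hδEm : ∀ i x, δEm i x = -pd δφm i x)
    (σ : Fin 2 → Fin 2 → (Fin 2 → ℝ) → ℝ)
    (hσ : ∀ i j, ContinuousOn (σ i j) (Set.Icc a b))
    (τ : Fin 2 → Fin 2 → Fin 2 → (Fin 2 → ℝ) → ℝ)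
    (hτ : ∀ i j k, ContinuousOn (τ i j k) (Set.Icc a b))
    (D : (Fin 2 → ℝ) → Fin 2 → ℝ)
    (hD : ∀ i, ContinuousOn (fun x => D x i) (Set.Icc a b))
    (hmicroMech : (∫ x in Set.Icc a b, ∑ i, ∑ j, σ i j x * pd (fun y => δr y i) j x)
        + (∫ x in Set.Icc a b,
            ∑ i, ∑ j, ∑ k, τ i j k x * pd2 (fun y => δr y i) j k x) = 0)
    (hmicroElec : ∫ x in Set.Icc a b, ∑ i, D x i * pd δrφ i x = 0)
    (σM : Fin 2 → Fin 2 → ℝ)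
    (hσM : ∀ i j, σM i j = (1/V) * ∫ x in Set.Icc a b, σ i j x)
    (τM : Fin 2 → Fin 2 → Fin 2 → ℝ)
    (hτM : ∀ i j k, τM i j k = (1/V) * ∫ x in Set.Icc a b, (τ i j k x + σ i j x * x k))
    (DM : Fin 2 → ℝ)
    (hDM : ∀ i, DM i = (1/V) * ∫ x in Set.Icc a b, D x i) :
    (1/V) * ∫ x in Set.Icc a b,
        ((∑ i, ∑ j, σ i j x * pd (fun y => δum y i) j x)
          + (∑ i, ∑ j, ∑ k, τ i j k x * pd2 (fun y => δum y i) j k x)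
          - ∑ i, D x i * δEm i x)
      = (∑ i, ∑ j, σM i j * δεM i j)
        + (∑ i, ∑ j, ∑ k, τM i j k * δgM i j k)
        - ∑ i, DM i * δEM i := by

  have hVpos : 0 < V := by rw [hV]; nlinarith
  have hVne : V ≠ 0 := ne_of_gt hVpos
  have hcpt : IsCompact (Set.Icc a b) := isCompact_Icc
  have hδri : ∀ i, ContDiffOn ℝ 2 (fun y => δr y i) U := fun i => contDiffOn_pi.mp hδr i
  have hum : ∀ i, (fun y => δum y i)
      = fun y => HMaux.polyQ (δεM i) (δgM i) y + δr y i := fun i =>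
    funext fun y => by rw [hδum y i]; rfl
  -- pointwise derivative formulas on the RVE
  have hpd1 : ∀ i j, ∀ x ∈ Set.Icc a b, pd (fun y => δum y i) j x
      = δεM i j + (∑ k, δgM i j k * x k) + pd (fun y => δr y i) j x := by
    intro i j x hx
    rw [hum i, HMaux.pd_polyQ_add
      (((hδri i).contDiffAt (hU.mem_nhds (hvU hx))).differentiableAt (by norm_num))
      (hδgM i) j]
  have hpd2um : ∀ i j k, ∀ x ∈ Set.Icc a b, pd2 (fun y => δum y i) j k x
      = δgM i j k + pd2 (fun y => δr y i) j k x := by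
    intro i j k x hx
    rw [hum i]
    exact HMaux.pd2_polyQ_add hU (hvU hx)
      (fun y hy => (hδri i).contDiffAt (hU.mem_nhds hy)) (hδgM i) j k
  have hpdE : ∀ i, ∀ x ∈ Set.Icc a b, δEm i x = δEM i - pd δrφ i x := by
    intro i x hx
    have hφ : δφm = fun y => (0 + ∑ p, (-δEM p) * y p) + δrφ y := by
      funext y
      rw [hδφm y]
      simp [Fin.sum_univ_two]
    rw [hδEm i x, hφ,
      HMaux.pd_add ((hasFDerivAt_const (0:ℝ) x).fun_add (HMaux.hasFDerivAt_lin _ x)).differentiableAt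
        ((hδrφ.contDiffAt (hU.mem_nhds (hvU hx))).differentiableAt (by norm_num)) i,
      HMaux.pd_affine]
    ring
  -- continuity of the fluctuation derivative fields on the RVE
  have hcpdr : ∀ i j, ContinuousOn (fun x => pd (fun y => δr y i) j x) (Set.Icc a b) :=
    fun i j => (HMaux.continuousOn_pd hU ((hδri i).of_le one_le_two) j).mono hvU
  have hcpd2r : ∀ i j k, ContinuousOn (fun x => pd2 (fun y => δr y i) j k x) (Set.Icc a b) :=
    fun i j k => (HMaux.continuousOn_pd2 hU (hδri i) j k).mono hvU
  have hcpdrφ : ∀ i, ContinuousOn (fun x => pd δrφ i x) (Set.Icc a b) :=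
    fun i => (HMaux.continuousOn_pd hU hδrφ i).mono hvU
  -- the pieces
  set v := Set.Icc a b with hv
  set A1 : (Fin 2 → ℝ) → ℝ := fun x => ∑ i, ∑ j, σ i j x * δεM i j with hA1def
  set A2 : (Fin 2 → ℝ) → ℝ :=
    fun x => ∑ i, ∑ j, ∑ k, (τ i j k x + σ i j x * x k) * δgM i j k with hA2def
  set A3 : (Fin 2 → ℝ) → ℝ := fun x => ∑ i, D x i * δEM i with hA3def
  set B1 : (Fin 2 → ℝ) → ℝ :=
    fun x => ∑ i, ∑ j, σ i j x * pd (fun y => δr y i) j x with hB1def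
  set B2 : (Fin 2 → ℝ) → ℝ :=
    fun x => ∑ i, ∑ j, ∑ k, τ i j k x * pd2 (fun y => δr y i) j k x with hB2def
  set B3 : (Fin 2 → ℝ) → ℝ := fun x => ∑ i, D x i * pd δrφ i x with hB3def
  -- integrability
  have hIA1 : IntegrableOn A1 v := by
    refine (continuousOn_finset_sum _ fun i _ => continuousOn_finset_sum _ fun j _ =>
      ?_).integrableOn_compact hcpt
    exact (hσ i j).mul continuousOn_const
  have hIA2 : IntegrableOn A2 v := by
    refine (continuousOn_finset_sum _ fun i _ => continuousOn_finset_sum _ fun j _ =>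
      continuousOn_finset_sum _ fun k _ => ?_).integrableOn_compact hcpt
    exact ((hτ i j k).add ((hσ i j).mul (continuous_apply k).continuousOn)).mul continuousOn_const
  have hIA3 : IntegrableOn A3 v := by
    refine (continuousOn_finset_sum _ fun i _ => ?_).integrableOn_compact hcpt
    exact (hD i).mul continuousOn_const
  have hIB1 : IntegrableOn B1 v := by
    refine (continuousOn_finset_sum _ fun i _ => continuousOn_finset_sum _ fun j _ =>
      ?_).integrableOn_compact hcpt
    exact (hσ i j).mul (hcpdr i j)
  have hIB2 : IntegrableOn B2 v := by
    refine (continuousOn_finset_sum _ fun i _ => continuousOn_finset_sum _ fun j _ =>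
      continuousOn_finset_sum _ fun k _ => ?_).integrableOn_compact hcpt
    exact (hτ i j k).mul (hcpd2r i j k)
  have hIB3 : IntegrableOn B3 v := by
    refine (continuousOn_finset_sum _ fun i _ => ?_).integrableOn_compact hcpt
    exact (hD i).mul (hcpdrφ i)
  -- rewrite the integrand
  have heq : Set.EqOn
      (fun x => (∑ i, ∑ j, σ i j x * pd (fun y => δum y i) j x)
        + (∑ i, ∑ j, ∑ k, τ i j k x * pd2 (fun y => δum y i) j k x)
        - ∑ i, D x i * δEm i x)
      (fun x => (A1 x + A2 x - A3 x) + (B1 x + B2 x + B3 x)) v := by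
    intro x hx
    have e1 := fun i j => hpd1 i j x hx
    have e2 := fun i j k => hpd2um i j k x hx
    have e3 := fun i => hpdE i x hx
    simp only [e1, e2, e3, hA1def, hA2def, hA3def, hB1def, hB2def, hB3def]
    simp only [Fin.sum_univ_two]
    ring
  have hIint : ∫ x in v,
      ((∑ i, ∑ j, σ i j x * pd (fun y => δum y i) j x)
        + (∑ i, ∑ j, ∑ k, τ i j k x * pd2 (fun y => δum y i) j k x)
        - ∑ i, D x i * δEm i x)
      = (∫ x in v, A1 x) + (∫ x in v, A2 x) - (∫ x in v, A3 x) := by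
    rw [setIntegral_congr_fun measurableSet_Icc heq]
    have e0 : (∫ x in v, ((A1 x + A2 x - A3 x) + (B1 x + B2 x + B3 x)))
        = (∫ x in v, (A1 x + A2 x - A3 x)) + ∫ x in v, (B1 x + B2 x + B3 x) :=
      integral_add ((hIA1.add hIA2).sub hIA3) ((hIB1.add hIB2).add hIB3)
    have e1 : (∫ x in v, (A1 x + A2 x - A3 x))
        = (∫ x in v, (A1 x + A2 x)) - ∫ x in v, A3 x := integral_sub (hIA1.add hIA2) hIA3
    have e2 : (∫ x in v, (A1 x + A2 x)) = (∫ x in v, A1 x) + ∫ x in v, A2 x :=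
      integral_add hIA1 hIA2
    have e3 : (∫ x in v, (B1 x + B2 x + B3 x))
        = (∫ x in v, (B1 x + B2 x)) + ∫ x in v, B3 x := integral_add (hIB1.add hIB2) hIB3
    have e4 : (∫ x in v, (B1 x + B2 x)) = (∫ x in v, B1 x) + ∫ x in v, B2 x :=
      integral_add hIB1 hIB2
    have h0 : (∫ x in v, B1 x) + (∫ x in v, B2 x) = 0 := hmicroMech
    have h0' : (∫ x in v, B3 x) = 0 := hmicroElec
    rw [e0, e1, e2, e3, e4, h0, h0']
    ring
  rw [hIint]
  -- compute the averaged integrals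
  have hA1int : (∫ x in v, A1 x) = ∑ i, ∑ j, (∫ x in v, σ i j x) * δεM i j := by
    rw [hA1def, integral_finset_sum _ (fun i _ => ?_)]
    · refine Finset.sum_congr rfl fun i _ => ?_
      rw [integral_finset_sum _ (fun j _ => ?_)]
      · exact Finset.sum_congr rfl fun j _ => integral_mul_const _ _
      · exact ((hσ i j).mul continuousOn_const).integrableOn_compact hcpt
    · refine (continuousOn_finset_sum _ fun j _ => ?_).integrableOn_compact hcpt
      exact (hσ i j).mul continuousOn_const
  have hA2int : (∫ x in v, A2 x)
      = ∑ i, ∑ j, ∑ k, (∫ x in v, (τ i j k x + σ i j x * x k)) * δgM i j k := by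
    rw [hA2def, integral_finset_sum _ (fun i _ => ?_)]
    · refine Finset.sum_congr rfl fun i _ => ?_
      rw [integral_finset_sum _ (fun j _ => ?_)]
      · refine Finset.sum_congr rfl fun j _ => ?_
        rw [integral_finset_sum _ (fun k _ => ?_)]
        · exact Finset.sum_congr rfl fun k _ => integral_mul_const _ _
        · exact (((hτ i j k).add ((hσ i j).mul
            (continuous_apply k).continuousOn)).mul continuousOn_const).integrableOn_compact hcpt
      · refine (continuousOn_finset_sum _ fun k _ => ?_).integrableOn_compact hcpt
        exact ((hτ i j k).add ((hσ i j).mul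
          (continuous_apply k).continuousOn)).mul continuousOn_const
    · refine (continuousOn_finset_sum _ fun j _ => continuousOn_finset_sum _ fun k _ =>
        ?_).integrableOn_compact hcpt
      exact ((hτ i j k).add ((hσ i j).mul (continuous_apply k).continuousOn)).mul continuousOn_const
  have hA3int : (∫ x in v, A3 x) = ∑ i, (∫ x in v, D x i) * δEM i := by
    rw [hA3def, integral_finset_sum _ (fun i _ => ?_)]
    · exact Finset.sum_congr rfl fun i _ => integral_mul_const _ _
    · exact ((hD i).mul continuousOn_const).integrableOn_compact hcpt
  rw [hA1int, hA2int, hA3int]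
  simp only [hσM, hτM, hDM, Fin.sum_univ_two]
  ring
end
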